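/- arXiv:2205.05552 — 4 statements merged into one kernel-verified Lean document; each statement's English description precedes it below -/
import Mathlib

section
/- Let θ : [0,∞) → [0,∞) be a continuous, strictly increasing bijection with θ(0) = 0. Let a ∈ ℝⁿ and r > 0, and let B = B(a,r) be the open ball of radius r about a. Then the weak Henstock–Orlicz quasinorm of the characteristic function of B satisfies ‖χ_{B(a,r)}‖_{w,θ} = 1 / θ⁻¹(1 / volume(B(a,r))). -/
open MeasureTheory Filter ENNReal

/-- The weak Henstock–Orlicz quasinorm:
`inf {α > 0 : ∀ t > 0, θ(t)·volume{x : |h x| > α·t} ≤ 1}` with `inf ∅ = ∞`. -/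
noncomputable def wNorm (n : ℕ) (θ : ℝ → ℝ) (h : EuclideanSpace ℝ (Fin n) → ℝ) : ℝ≥0∞ :=
  sInf (ENNReal.ofReal '' {a : ℝ | 0 < a ∧
    ∀ t : ℝ, 0 < t → ENNReal.ofReal (θ t) * volume {x | a * t < |h x|} ≤ 1})

/-- A Young function: `θ : [0,∞) → [0,∞)`, `θ 0 = 0`, nondecreasing, continuous,
and `θ t → ∞` as `t → ∞`. -/
structure IsYoung (θ : ℝ → ℝ) : Prop where
  nonneg : ∀ t : ℝ, 0 ≤ t → 0 ≤ θ t
  zero : θ 0 = 0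
  mono : MonotoneOn θ (Set.Ici 0)
  cont : ContinuousOn θ (Set.Ici 0)
  tends : Tendsto θ atTop atTop

/-- The class `𝔉` of Young functions: strictly increasing, bijective from `[0,∞)`
onto `[0,∞)`, continuous and concave. -/
structure MemF (θ : ℝ → ℝ) extends IsYoung θ : Prop where
  strictMono : StrictMonoOn θ (Set.Ici 0)
  bijOn : Set.BijOn θ (Set.Ici 0) (Set.Ici 0)
  concave : ConcaveOn ℝ (Set.Ici 0) θ

/-- The Δ₂-condition: `θ(2t) ≤ C·θ(t)` for all `t > 0`, for some constant `C > 0`. -/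
def Delta2 (θ : ℝ → ℝ) : Prop := ∃ C : ℝ, 0 < C ∧ ∀ t : ℝ, 0 < t → θ (2 * t) ≤ C * θ t

/-- The modular `Υ_θ(h) = sup_{t>0} θ(t)·volume{x : |h x| > t}`, valued in `[0,∞]`. -/
noncomputable def modular (n : ℕ) (θ : ℝ → ℝ) (h : EuclideanSpace ℝ (Fin n) → ℝ) : ℝ≥0∞ :=
  ⨆ (t : ℝ) (_ : 0 < t), ENNReal.ofReal (θ t) * volume {x | t < |h x|}

/-- The Luxemburg norm `inf {α > 0 : ∫⁻ θ(|h|/α) ≤ 1}` with `inf ∅ = ∞`. -/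
noncomputable def luxNorm (n : ℕ) (θ : ℝ → ℝ) (h : EuclideanSpace ℝ (Fin n) → ℝ) : ℝ≥0∞ :=
  sInf (ENNReal.ofReal '' {a : ℝ | 0 < a ∧
    (∫⁻ x, ENNReal.ofReal (θ (|h x| / a)) ∂volume) ≤ 1})

theorem stmt_9 (n : ℕ) (hn : 1 ≤ n) (θ θinv : ℝ → ℝ)
    (hzero : θ 0 = 0) (hc : ContinuousOn θ (Set.Ici 0))
    (hsm : StrictMonoOn θ (Set.Ici 0)) (hbij : Set.BijOn θ (Set.Ici 0) (Set.Ici 0))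
    (hinv1 : ∀ t : ℝ, 0 ≤ t → θinv (θ t) = t)
    (hinv2 : ∀ t : ℝ, 0 ≤ t → θ (θinv t) = t)
    (a : EuclideanSpace ℝ (Fin n)) (r : ℝ) (hr : 0 < r) :
    wNorm n θ (Set.indicator (Metric.ball a r) (fun _ => (1 : ℝ))) =
      ENNReal.ofReal (1 / θinv (1 / (volume (Metric.ball a r)).toReal)) := by
  set B := Metric.ball a r with hB
  have hVpos : 0 < volume B := Metric.measure_ball_pos _ _ hr
  have hVfin : volume B < ⊤ := measure_ball_lt_top
  set V := (volume B).toReal with hVdef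
  have hV : 0 < V := ENNReal.toReal_pos hVpos.ne' hVfin.ne
  have hvol : volume B = ENNReal.ofReal V := (ENNReal.ofReal_toReal hVfin.ne).symm
  obtain ⟨s, hs0, hsθ⟩ : ∃ s, 0 ≤ s ∧ θ s = 1 / V := by
    obtain ⟨s, hs, hsθ⟩ := hbij.surjOn (show (1:ℝ)/V ∈ Set.Ici 0 by
      simp only [Set.mem_Ici]; positivity)
    exact ⟨s, hs, hsθ⟩
  have hm_eq : θinv (1 / V) = s := by rw [← hsθ, hinv1 s hs0]
  have hspos : 0 < s := by
    rcases hs0.lt_or_eq with h | h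
    · exact h
    · exfalso
      rw [← h, hzero] at hsθ
      have : (0:ℝ) < 1 / V := by positivity
      linarith
  have key : {b : ℝ | 0 < b ∧ ∀ t, 0 < t →
      ENNReal.ofReal (θ t) * volume {x | b * t < |Set.indicator B (fun _ => (1:ℝ)) x|} ≤ 1}
      = Set.Ici (1/s) := by
    ext b
    simp only [Set.mem_setOf_eq, Set.mem_Ici]
    constructor
    · rintro ⟨hb, hcond⟩
      by_contra hlt
      push_neg at hlt
      have h1 : s < 1 / b := by
        rw [lt_div_iff₀ hb]
        have := (lt_div_iff₀ hspos).1 hlt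
        linarith [mul_comm b s]
      obtain ⟨t, ht1, ht2⟩ := exists_between h1
      have ht0 : 0 < t := hspos.trans ht1
      have hbt : b * t < 1 := by
        rw [lt_div_iff₀ hb] at ht2
        linarith [mul_comm t b]
      have hθt : 1 / V < θ t := by
        rw [← hsθ]
        exact hsm hs0 ht0.le ht1
      have hθt0 : 0 ≤ θ t := le_of_lt (lt_trans (by positivity) hθt)
      have hset : {x | b * t < |Set.indicator B (fun _ => (1:ℝ)) x|} = B := by
        ext x
        simp only [Set.mem_setOf_eq]
        by_cases hx : x ∈ B
        · rw [Set.indicator_of_mem hx]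
          simpa using ⟨fun _ => hx, fun _ => hbt⟩
        · rw [Set.indicator_of_notMem hx]
          simp only [abs_zero]
          constructor
          · intro h; exact absurd h (not_lt.2 (by positivity))
          · intro h; exact absurd h hx
      have hle := hcond t ht0
      rw [hset, hvol, ← ENNReal.ofReal_mul hθt0, ← ENNReal.ofReal_one,
        ENNReal.ofReal_le_ofReal_iff (by norm_num)] at hle
      have : 1 < θ t * V := by
        rw [div_lt_iff₀ hV] at hθt
        linarith
      linarith
    · intro hbs
      have hb : 0 < b := lt_of_lt_of_le (by positivity) hbs
      refine ⟨hb, fun t ht => ?_⟩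
      rcases lt_or_ge (b * t) 1 with hbt | hbt
      · have hts : t ≤ s := by
          have h1 : t < 1 / b := by rw [lt_div_iff₀ hb]; linarith [mul_comm t b]
          have h2 : 1 / b ≤ s := by
            rw [div_le_iff₀ hb]
            rw [div_le_iff₀ hspos] at hbs
            linarith [mul_comm s b, mul_comm b s]
          linarith
        have hθ : θ t ≤ 1 / V := by
          rw [← hsθ]
          exact hsm.monotoneOn ht.le hs0 hts
        have hsub : {x | b * t < |Set.indicator B (fun _ => (1:ℝ)) x|} ⊆ B := by
          intro x hx
          by_contra hxB
          rw [Set.mem_setOf_eq, Set.indicator_of_notMem hxB, abs_zero] at hx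
          nlinarith
        calc ENNReal.ofReal (θ t) * volume {x | b * t < |Set.indicator B (fun _ => (1:ℝ)) x|}
            ≤ ENNReal.ofReal (1/V) * ENNReal.ofReal V := by
              refine mul_le_mul' (ENNReal.ofReal_le_ofReal hθ) ?_
              rw [← hvol]; exact measure_mono hsub
          _ = ENNReal.ofReal (1/V * V) := (ENNReal.ofReal_mul (by positivity)).symm
          _ = 1 := by rw [one_div, inv_mul_cancel₀ hV.ne', ENNReal.ofReal_one]
      · have hset : {x | b * t < |Set.indicator B (fun _ => (1:ℝ)) x|} = ∅ := by
          ext x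
          simp only [Set.mem_setOf_eq, Set.mem_empty_iff_false, iff_false, not_lt]
          by_cases hx : x ∈ B
          · rw [Set.indicator_of_mem hx]; simpa using hbt
          · rw [Set.indicator_of_notMem hx]; simp only [abs_zero]; positivity
        rw [hset]
        simp
  rw [hVdef] at hm_eq
  rw [hm_eq]
  unfold wNorm
  rw [key]
  apply le_antisymm
  · exact sInf_le ⟨1/s, Set.self_mem_Ici, rfl⟩
  · refine le_sInf ?_
    rintro _ ⟨b, hb, rfl⟩
    exact ENNReal.ofReal_le_ofReal hb
end

section
/- Let θ₁ and θ₂ be Young functions in the class 𝔉 and suppose there is a constant C > 0 such that ‖h‖_{w,θ₁} ≤ C·‖h‖_{w,θ₂} for every measurable h : ℝⁿ → ℝ. Then there exists a constant C' > 0 such that θ₁(t) ≤ θ₂(C'·t) for all t > 0. -/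
open MeasureTheory Filter ENNReal

lemma exists_set_of_volume (n : ℕ) (hn : 1 ≤ n) (V : ℝ) (hV : 0 < V) :
    ∃ E : Set (EuclideanSpace ℝ (Fin n)), MeasurableSet E ∧ volume E = ENNReal.ofReal V := by
  set r : ℝ := V ^ ((n : ℝ)⁻¹) with hr
  have hrpos : 0 < r := Real.rpow_pos_of_pos hV _
  refine ⟨(MeasurableEquiv.toLp 2 (Fin n → ℝ)).symm ⁻¹' (Set.univ.pi fun _ => Set.Ico 0 r),
    (MeasurableEquiv.toLp 2 (Fin n → ℝ)).symm.measurable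
      (MeasurableSet.univ_pi fun _ => measurableSet_Ico), ?_⟩
  rw [(EuclideanSpace.volume_preserving_symm_measurableEquiv_toLp (Fin n)).measure_preimage
    (MeasurableSet.univ_pi fun _ => measurableSet_Ico).nullMeasurableSet]
  rw [volume_pi_pi]
  simp only [Real.volume_Ico, sub_zero, Finset.prod_const, Finset.card_univ, Fintype.card_fin]
  rw [← ENNReal.ofReal_pow hrpos.le, hr, ← Real.rpow_natCast (V ^ ((n:ℝ)⁻¹)) n,
    ← Real.rpow_mul hV.le, inv_mul_cancel₀ (by positivity : (n:ℝ) ≠ 0), Real.rpow_one]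

theorem stmt_12 (n : ℕ) (hn : 1 ≤ n) (θ₁ θ₂ : ℝ → ℝ) (h1 : MemF θ₁) (h2 : MemF θ₂)
    (C : ℝ) (hC : 0 < C)
    (hle : ∀ h : EuclideanSpace ℝ (Fin n) → ℝ, Measurable h →
      wNorm n θ₁ h ≤ ENNReal.ofReal C * wNorm n θ₂ h) :
    ∃ C' : ℝ, 0 < C' ∧ ∀ t : ℝ, 0 < t → θ₁ t ≤ θ₂ (C' * t) := by
  classical
  refine ⟨C, hC, fun t ht => ?_⟩
  set u := θ₁ t with hu
  have hu0 : 0 < u := by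
    have := h1.strictMono (Set.mem_Ici.2 le_rfl) (Set.mem_Ici.2 ht.le) ht
    rwa [h1.zero] at this
  obtain ⟨s, hsmem, hs⟩ := h2.bijOn.surjOn (Set.mem_Ici.2 hu0.le)
  have hspos : 0 < s := by
    rcases (Set.mem_Ici.1 hsmem).lt_or_eq with hlt | heq
    · exact hlt
    · exfalso; rw [← heq, h2.zero] at hs; exact hu0.ne hs
  obtain ⟨E, hE, hEvol⟩ := exists_set_of_volume n hn (1 / u) (by positivity)
  set h : EuclideanSpace ℝ (Fin n) → ℝ := E.indicator fun _ => s with hdef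
  have hmeas : Measurable h := measurable_const.indicator hE
  have habs1 : ∀ x, x ∈ E → |h x| = s := by
    intro x hx
    rw [hdef, Set.indicator_of_mem hx, abs_of_pos hspos]
  have habs2 : ∀ x, x ∉ E → |h x| = 0 := by
    intro x hx
    rw [hdef, Set.indicator_of_notMem hx, abs_zero]
  have hset1 : ∀ a τ : ℝ, 0 ≤ a * τ → a * τ < s → {x | a * τ < |h x|} = E := by
    intro a τ hge hlt
    ext x
    simp only [Set.mem_setOf_eq]
    by_cases hx : x ∈ E
    · rw [habs1 x hx]; simp [hx, hlt]
    · rw [habs2 x hx]; simp [hx, not_lt.2 hge]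
  have hset2 : ∀ a τ : ℝ, s ≤ a * τ → {x | a * τ < |h x|} = ∅ := by
    intro a τ hge
    ext x
    simp only [Set.mem_setOf_eq, Set.mem_empty_iff_false, iff_false, not_lt]
    by_cases hx : x ∈ E
    · rw [habs1 x hx]; exact hge
    · rw [habs2 x hx]; linarith
  have hub : wNorm n θ₂ h ≤ 1 := by
    have hmem : (1 : ℝ≥0∞) ∈ ENNReal.ofReal '' {a : ℝ | 0 < a ∧
        ∀ τ : ℝ, 0 < τ → ENNReal.ofReal (θ₂ τ) * volume {x | a * τ < |h x|} ≤ 1} := by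
      refine ⟨1, ⟨one_pos, fun τ hτ => ?_⟩, ENNReal.ofReal_one⟩
      rcases lt_or_ge (1 * τ) s with hcase | hcase
      · rw [hset1 1 τ (by linarith) hcase, hEvol, ← ENNReal.ofReal_mul
          (h2.nonneg τ hτ.le), ← ENNReal.ofReal_one]
        apply ENNReal.ofReal_le_ofReal
        have hτs : τ ≤ s := by linarith
        have hθ : θ₂ τ ≤ u := by
          rw [← hs]
          exact h2.mono (Set.mem_Ici.2 hτ.le) (Set.mem_Ici.2 hspos.le) hτs
        calc θ₂ τ * (1 / u) ≤ u * (1 / u) :=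
              mul_le_mul_of_nonneg_right hθ (by positivity)
          _ = 1 := by field_simp
      · rw [hset2 1 τ hcase]
        simp
    exact sInf_le hmem
  have hlb : ENNReal.ofReal (s / t) ≤ wNorm n θ₁ h := by
    apply le_sInf
    rintro b ⟨a, ⟨ha, haspec⟩, rfl⟩
    apply ENNReal.ofReal_le_ofReal
    by_contra hcon
    push_neg at hcon
    rw [lt_div_iff₀ ht] at hcon
    have hat : t < s / a := by
      rw [lt_div_iff₀ ha]
      linarith
    obtain ⟨τ, hτ1, hτ2⟩ := exists_between hat
    have hτpos : 0 < τ := ht.trans hτ1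
    have haτ : a * τ < s := by
      rw [lt_div_iff₀ ha] at hτ2
      linarith
    have hspec := haspec τ hτpos
    rw [hset1 a τ (by positivity) haτ, hEvol, ← ENNReal.ofReal_mul
      (h1.nonneg τ hτpos.le)] at hspec
    have hgt : (1 : ℝ) < θ₁ τ * (1 / u) := by
      have hlt : u < θ₁ τ := h1.strictMono (Set.mem_Ici.2 ht.le) (Set.mem_Ici.2 hτpos.le) hτ1
      calc (1:ℝ) = u * (1/u) := by field_simp
        _ < θ₁ τ * (1/u) := mul_lt_mul_of_pos_right hlt (by positivity)
    have hcontr : (1 : ℝ≥0∞) < ENNReal.ofReal (θ₁ τ * (1 / u)) := by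
      rw [← ENNReal.ofReal_one]
      exact (ENNReal.ofReal_lt_ofReal_iff_of_nonneg zero_le_one).2 hgt
    exact absurd hspec (not_le.2 hcontr)
  have hchain : ENNReal.ofReal (s / t) ≤ ENNReal.ofReal C :=
    calc ENNReal.ofReal (s / t) ≤ wNorm n θ₁ h := hlb
      _ ≤ ENNReal.ofReal C * wNorm n θ₂ h := hle h hmeas
      _ ≤ ENNReal.ofReal C * 1 := mul_le_mul_right hub _
      _ = ENNReal.ofReal C := mul_one _
  have hst : s / t ≤ C := (ENNReal.ofReal_le_ofReal_iff hC.le).1 hchain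
  have hsC : s ≤ C * t := by
    rw [div_le_iff₀ ht] at hst
    linarith
  calc u = θ₂ s := hs.symm
    _ ≤ θ₂ (C * t) := h2.mono (Set.mem_Ici.2 hspos.le) (Set.mem_Ici.2 (by positivity)) hsC
end

section
/- Let θ₁ and θ₂ be Young functions in the class 𝔉. The following are equivalent: (1) there is a constant C > 0 with θ₁(t) ≤ θ₂(C·t) for all t > 0 (i.e. θ₁ Δ θ₂); (2) every measurable h : ℝⁿ → ℝ with ‖h‖_{w,θ₂} < ∞ satisfies ‖h‖_{w,θ₁} < ∞; (3) there is a constant C > 0 such that ‖h‖_{w,θ₁} ≤ C·‖h‖_{w,θ₂} for every measurable h : ℝⁿ → ℝ. -/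
open MeasureTheory Filter ENNReal

section AuxLemmas

open Set Metric

/-- (1) → (3): domination of Young functions gives quasinorm comparison. -/
lemma wNorm_le_of_dom (n : ℕ) (θ₁ θ₂ : ℝ → ℝ) {C : ℝ} (hC : 0 < C)
    (hle : ∀ t : ℝ, 0 < t → θ₁ t ≤ θ₂ (C * t)) (h : EuclideanSpace ℝ (Fin n) → ℝ) :
    wNorm n θ₁ h ≤ ENNReal.ofReal C * wNorm n θ₂ h := by
  have hC0 : (ENNReal.ofReal C) ≠ 0 := by simpa using hC
  have hCt : (ENNReal.ofReal C) ≠ ⊤ := ENNReal.ofReal_ne_top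
  rw [mul_comm, ← ENNReal.div_le_iff_le_mul (Or.inl hC0) (Or.inl hCt)]
  unfold wNorm
  apply le_sInf
  rintro b ⟨a, ⟨ha, hadm⟩, rfl⟩
  rw [ENNReal.div_le_iff_le_mul (Or.inl hC0) (Or.inl hCt)]
  have hmem : ENNReal.ofReal (C * a) ∈
      (ENNReal.ofReal '' {a : ℝ | 0 < a ∧
        ∀ t : ℝ, 0 < t → ENNReal.ofReal (θ₁ t) * volume {x | a * t < |h x|} ≤ 1}) := by
    refine ⟨C * a, ⟨mul_pos hC ha, ?_⟩, rfl⟩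
    intro t ht
    have h1 : ENNReal.ofReal (θ₁ t) ≤ ENNReal.ofReal (θ₂ (C * t)) :=
      ENNReal.ofReal_le_ofReal (hle t ht)
    have h2 : volume {x : EuclideanSpace ℝ (Fin n) | C * a * t < |h x|}
        = volume {x : EuclideanSpace ℝ (Fin n) | a * (C * t) < |h x|} := by
      congr 1; ext x; constructor <;> intro hx <;> simpa [mul_comm, mul_left_comm, mul_assoc] using hx
    calc ENNReal.ofReal (θ₁ t) * volume {x : EuclideanSpace ℝ (Fin n) | C * a * t < |h x|}
        ≤ ENNReal.ofReal (θ₂ (C * t)) * volume {x : EuclideanSpace ℝ (Fin n) | a * (C * t) < |h x|} := by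
          rw [h2]; exact mul_le_mul_left h1 _
      _ ≤ 1 := hadm (C * t) (mul_pos hC ht)
  calc sInf _ ≤ ENNReal.ofReal (C * a) := sInf_le hmem
    _ = ENNReal.ofReal C * ENNReal.ofReal a := ENNReal.ofReal_mul hC.le
    _ = ENNReal.ofReal a * ENNReal.ofReal C := mul_comm _ _

/-- Construction of an extremal function whose distribution is exactly `1/θ₂`. -/
lemma exists_extremal (n : ℕ) (hn : 1 ≤ n) {θ₂ : ℝ → ℝ} (h2 : MemF θ₂) :
    ∃ h : EuclideanSpace ℝ (Fin n) → ℝ, Measurable h ∧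
      ∀ s : ℝ, 0 < s → volume {x | s < |h x|} = (ENNReal.ofReal (θ₂ s))⁻¹ := by
  haveI : Nonempty (Fin n) := ⟨⟨0, hn⟩⟩
  haveI : Nontrivial (EuclideanSpace ℝ (Fin n)) := inferInstance
  have hn0 : n ≠ 0 := by omega
  set E := EuclideanSpace ℝ (Fin n)
  set B : ℝ≥0∞ := volume (Metric.ball (0 : E) 1) with hBdef
  have hB0 : B ≠ 0 := (measure_ball_pos _ _ one_pos).ne'
  have hBt : B ≠ ⊤ := measure_ball_lt_top.ne
  set b : ℝ := (B.toReal)⁻¹ with hbdef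
  have hb : 0 < b := inv_pos.2 (ENNReal.toReal_pos hB0 hBt)
  -- the inverse of θ₂ on [0, ∞), extended by 0
  set φ : ℝ → ℝ := fun u => if u ≤ 0 then 0 else Function.invFunOn θ₂ (Set.Ici 0) u with hφdef
  have hmemIci : ∀ u : ℝ, 0 < u → Function.invFunOn θ₂ (Set.Ici 0) u ∈ Set.Ici (0 : ℝ) :=
    fun u hu => h2.bijOn.surjOn.mapsTo_invFunOn hu.le
  have hright : ∀ u : ℝ, 0 < u → θ₂ (φ u) = u := by
    intro u hu
    simp only [hφdef, if_neg (not_le.2 hu)]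
    exact h2.bijOn.invOn_invFunOn.2 hu.le
  have hφnonneg : ∀ u : ℝ, 0 ≤ φ u := by
    intro u
    by_cases hu : u ≤ 0
    · simp [hφdef, hu]
    · simp only [hφdef, if_neg hu]
      exact hmemIci u (not_le.1 hu)
  have hφmono : Monotone φ := by
    intro u v huv
    by_cases hu : u ≤ 0
    · simp only [hφdef, if_pos hu]; exact hφnonneg v
    · have hu' : 0 < u := not_le.1 hu
      have hv' : 0 < v := hu'.trans_le huv
      have hmu := hmemIci u hu'
      have hmv := hmemIci v hv'
      simp only [hφdef, if_neg hu, if_neg (not_le.2 hv')]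
      refine (h2.strictMono.le_iff_le hmu hmv).1 ?_
      rw [h2.bijOn.invOn_invFunOn.2 hu'.le, h2.bijOn.invOn_invFunOn.2 hv'.le]
      exact huv
  have hkey : ∀ s u : ℝ, 0 ≤ s → 0 < u → (s < φ u ↔ θ₂ s < u) := by
    intro s u hs hu
    have h1 : θ₂ s < θ₂ (φ u) ↔ s < φ u := h2.strictMono.lt_iff_lt hs (hφnonneg u)
    rw [hright u hu] at h1
    exact h1.symm
  refine ⟨fun x => φ (b / ‖x‖ ^ n), (hφmono.measurable).comp
    (measurable_const.div ((measurable_norm).pow_const n)), ?_⟩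
  intro s hs
  have hθs : 0 < θ₂ s := by
    have := h2.strictMono (Set.self_mem_Ici) (le_of_lt hs) hs
    rwa [h2.zero] at this
  set r : ℝ := (b / θ₂ s) ^ ((n : ℝ)⁻¹) with hrdef
  have hbθ : 0 < b / θ₂ s := div_pos hb hθs
  have hr0 : 0 ≤ r := Real.rpow_nonneg hbθ.le _
  have hrn : r ^ n = b / θ₂ s := Real.rpow_inv_natCast_pow hbθ.le hn0
  have hset : {x : E | s < |φ (b / ‖x‖ ^ n)|} = Metric.ball (0 : E) r \ {0} := by
    ext x
    by_cases hx : x = 0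
    · subst hx
      have hφ0 : φ 0 = 0 := by simp [hφdef]
      simp [norm_zero, zero_pow hn0, _root_.div_zero, hφ0, not_lt.2 hs.le]
    · have hnx : 0 < ‖x‖ := norm_pos_iff.2 hx
      have hnxn : 0 < ‖x‖ ^ n := pow_pos hnx n
      have hu : 0 < b / ‖x‖ ^ n := div_pos hb hnxn
      simp only [Set.mem_setOf_eq, Set.mem_diff, Metric.mem_ball, dist_zero_right,
        Set.mem_singleton_iff, abs_of_nonneg (hφnonneg _)]
      rw [hkey s _ hs.le hu]
      constructor
      · intro hlt
        refine ⟨?_, hx⟩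
        have h1 : ‖x‖ ^ n < b / θ₂ s := by
          rw [lt_div_iff₀ hθs]
          have := (lt_div_iff₀ hnxn).1 hlt
          linarith [mul_comm (θ₂ s) (‖x‖ ^ n)]
        have := h1.trans_eq hrn.symm
        exact lt_of_pow_lt_pow_left₀ n hr0 this
      · rintro ⟨hlt, -⟩
        have h1 : ‖x‖ ^ n < r ^ n := pow_lt_pow_left₀ hlt (norm_nonneg x) hn0
        rw [hrn] at h1
        rw [lt_div_iff₀ hnxn]
        have := (lt_div_iff₀ hθs).1 h1
        linarith [mul_comm (‖x‖ ^ n) (θ₂ s)]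
  rw [hset, measure_diff_null (measure_singleton 0),
    Measure.addHaar_ball _ _ hr0]
  have hfr : (Module.finrank ℝ E) = n := by
    simp [E, finrank_euclideanSpace]
  rw [hfr, hrn, ENNReal.ofReal_div_of_pos hθs]
  have hofb : ENNReal.ofReal b = B⁻¹ := by
    rw [hbdef, ENNReal.ofReal_inv_of_pos (ENNReal.toReal_pos hB0 hBt),
      ENNReal.ofReal_toReal hBt]
  rw [hofb, div_eq_mul_inv, mul_comm B⁻¹ (ENNReal.ofReal (θ₂ s))⁻¹, mul_assoc,
    ENNReal.inv_mul_cancel hB0 hBt, mul_one]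

end AuxLemmas

theorem stmt_13 (n : ℕ) (hn : 1 ≤ n) (θ₁ θ₂ : ℝ → ℝ) (h1 : MemF θ₁) (h2 : MemF θ₂) :
    ((∃ C : ℝ, 0 < C ∧ ∀ t : ℝ, 0 < t → θ₁ t ≤ θ₂ (C * t)) ↔
      (∀ h : EuclideanSpace ℝ (Fin n) → ℝ, Measurable h →
        wNorm n θ₂ h < ⊤ → wNorm n θ₁ h < ⊤))
    ∧ ((∀ h : EuclideanSpace ℝ (Fin n) → ℝ, Measurable h →
        wNorm n θ₂ h < ⊤ → wNorm n θ₁ h < ⊤) ↔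
      (∃ C : ℝ, 0 < C ∧ ∀ h : EuclideanSpace ℝ (Fin n) → ℝ, Measurable h →
        wNorm n θ₁ h ≤ ENNReal.ofReal C * wNorm n θ₂ h)) := by

  -- (2) → (1) via the extremal function
  have h21 : (∀ h : EuclideanSpace ℝ (Fin n) → ℝ, Measurable h →
        wNorm n θ₂ h < ⊤ → wNorm n θ₁ h < ⊤) →
      (∃ C : ℝ, 0 < C ∧ ∀ t : ℝ, 0 < t → θ₁ t ≤ θ₂ (C * t)) := by
    intro H
    obtain ⟨h, hmeas, hdist⟩ := exists_extremal n hn h2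
    have hw2 : wNorm n θ₂ h < ⊤ := by
      have hmem : ENNReal.ofReal 1 ∈ (ENNReal.ofReal '' {a : ℝ | 0 < a ∧
          ∀ t : ℝ, 0 < t → ENNReal.ofReal (θ₂ t) * volume {x | a * t < |h x|} ≤ 1}) := by
        refine ⟨1, ⟨one_pos, ?_⟩, rfl⟩
        intro t ht
        rw [one_mul, hdist t ht]
        exact ENNReal.mul_inv_le_one _
      calc wNorm n θ₂ h ≤ ENNReal.ofReal 1 := sInf_le hmem
        _ < ⊤ := ENNReal.ofReal_lt_top
    have hw1 := H h hmeas hw2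
    have hne : {a : ℝ | 0 < a ∧
        ∀ t : ℝ, 0 < t → ENNReal.ofReal (θ₁ t) * volume {x | a * t < |h x|} ≤ 1}.Nonempty := by
      by_contra hcon
      rw [Set.not_nonempty_iff_eq_empty] at hcon
      rw [wNorm, hcon, Set.image_empty, sInf_empty] at hw1
      exact absurd hw1 (lt_irrefl ⊤)
    obtain ⟨a, ha, hadm⟩ := hne
    refine ⟨a, ha, fun t ht => ?_⟩
    have hat : 0 < a * t := mul_pos ha ht
    have hθat : 0 < θ₂ (a * t) := by
      have := h2.strictMono (Set.self_mem_Ici) (le_of_lt hat) hat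
      rwa [h2.zero] at this
    have h0 : (ENNReal.ofReal (θ₂ (a * t))) ≠ 0 := by simpa using hθat
    have hT : (ENNReal.ofReal (θ₂ (a * t))) ≠ ⊤ := ENNReal.ofReal_ne_top
    have hle := hadm t ht
    rw [hdist (a * t) hat, ← div_eq_mul_inv] at hle
    rw [ENNReal.div_le_iff_le_mul (Or.inl h0) (Or.inl hT), one_mul] at hle
    exact (ENNReal.ofReal_le_ofReal_iff (h2.nonneg _ hat.le)).1 hle
  -- (3) → (2)
  have h32 : (∃ C : ℝ, 0 < C ∧ ∀ h : EuclideanSpace ℝ (Fin n) → ℝ, Measurable h →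
        wNorm n θ₁ h ≤ ENNReal.ofReal C * wNorm n θ₂ h) →
      (∀ h : EuclideanSpace ℝ (Fin n) → ℝ, Measurable h →
        wNorm n θ₂ h < ⊤ → wNorm n θ₁ h < ⊤) := by
    rintro ⟨C, hC, hbound⟩ h hmeas hw2
    exact (hbound h hmeas).trans_lt (ENNReal.mul_lt_top ENNReal.ofReal_lt_top hw2)
  -- (1) → (3)
  have h13 : (∃ C : ℝ, 0 < C ∧ ∀ t : ℝ, 0 < t → θ₁ t ≤ θ₂ (C * t)) →
      (∃ C : ℝ, 0 < C ∧ ∀ h : EuclideanSpace ℝ (Fin n) → ℝ, Measurable h →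
        wNorm n θ₁ h ≤ ENNReal.ofReal C * wNorm n θ₂ h) := by
    rintro ⟨C, hC, hle⟩
    exact ⟨C, hC, fun h _ => wNorm_le_of_dom n θ₁ θ₂ hC hle h⟩
  exact ⟨⟨fun h1 => h32 (h13 h1), h21⟩, ⟨fun hh => h13 (h21 hh), h32⟩⟩
end

section
/- Let θ be a Young function, let (hₙ) be a sequence of measurable functions ℝⁿ → [0,∞) that is pointwise nondecreasing in n, and let h : ℝⁿ → [0,∞) be measurable with hₙ(x) → h(x) for volume-almost every x and ‖h‖_{w,θ} < ∞. Then ‖hₙ‖_{w,θ} → ‖h‖_{w,θ} as n → ∞. -/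
open MeasureTheory Filter ENNReal

lemma wNorm_mono_ae {n : ℕ} {θ : ℝ → ℝ} {g f : EuclideanSpace ℝ (Fin n) → ℝ}
    (hgf : ∀ᵐ x ∂(volume : Measure (EuclideanSpace ℝ (Fin n))), |g x| ≤ |f x|) :
    wNorm n θ g ≤ wNorm n θ f := by
  apply sInf_le_sInf
  rintro _ ⟨a, ⟨ha, hA⟩, rfl⟩
  refine ⟨a, ⟨ha, fun t ht => ?_⟩, rfl⟩
  refine le_trans (mul_le_mul_right (measure_mono_ae ?_) _) (hA t ht)
  filter_upwards [hgf] with x hx hxm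
  exact lt_of_lt_of_le hxm hx

theorem stmt_18 (n : ℕ) (hn : 1 ≤ n) (θ : ℝ → ℝ) (hθ : IsYoung θ)
    (hseq : ℕ → EuclideanSpace ℝ (Fin n) → ℝ) (hmeas : ∀ k, Measurable (hseq k))
    (hnonneg : ∀ k x, 0 ≤ hseq k x)
    (hmono : ∀ x, Monotone (fun k => hseq k x))
    (h : EuclideanSpace ℝ (Fin n) → ℝ) (hh : Measurable h) (hnn : ∀ x, 0 ≤ h x)
    (hconv : ∀ᵐ x ∂(volume : Measure (EuclideanSpace ℝ (Fin n))),
      Tendsto (fun k => hseq k x) atTop (nhds (h x)))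
    (hfin : wNorm n θ h < ⊤) :
    Tendsto (fun k => wNorm n θ (hseq k)) atTop (nhds (wNorm n θ h)) := by
  have hle : ∀ᵐ x ∂(volume : Measure (EuclideanSpace ℝ (Fin n))), ∀ k, hseq k x ≤ h x :=
    hconv.mono fun x hx k => (hmono x).ge_of_tendsto hx k
  have hNk_le : ∀ k, wNorm n θ (hseq k) ≤ wNorm n θ h := fun k =>
    wNorm_mono_ae (hle.mono fun x hx => by
      rw [abs_of_nonneg (hnonneg k x), abs_of_nonneg (hnn x)]; exact hx k)
  have hNmono : Monotone (fun k => wNorm n θ (hseq k)) := fun i j hij =>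
    wNorm_mono_ae (Filter.Eventually.of_forall fun x => by
      rw [abs_of_nonneg (hnonneg i x), abs_of_nonneg (hnonneg j x)]; exact hmono x hij)
  set L := ⨆ k, wNorm n θ (hseq k) with hL
  have hLle : L ≤ wNorm n θ h := iSup_le hNk_le
  have key : wNorm n θ h ≤ L := by
    apply ENNReal.le_of_forall_pos_le_add
    intro ε hε hLlt
    set a : ℝ := L.toReal + ε with ha
    have hapos : 0 < a := by
      have := ENNReal.toReal_nonneg (a := L); positivity
    have haL : ENNReal.ofReal a = L + ε := by
      rw [ha, ENNReal.ofReal_add ENNReal.toReal_nonneg ε.coe_nonneg,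
        ENNReal.ofReal_toReal hLlt.ne, ENNReal.ofReal_coe_nnreal]
    have hLlta : L < ENNReal.ofReal a := by
      rw [haL]
      exact ENNReal.lt_add_right hLlt.ne (by exact_mod_cast hε.ne')
    -- a is admissible for each hseq k
    have hadm : ∀ k t, 0 < t →
        ENNReal.ofReal (θ t) * volume {x | a * t < |hseq k x|} ≤ 1 := by
      intro k t ht
      have hlt : sInf (ENNReal.ofReal '' {b : ℝ | 0 < b ∧
          ∀ t : ℝ, 0 < t → ENNReal.ofReal (θ t) * volume {x | b * t < |hseq k x|} ≤ 1})
          < ENNReal.ofReal a := lt_of_le_of_lt (le_iSup (fun k => wNorm n θ (hseq k)) k) hLlta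
      obtain ⟨c, hc, hclt⟩ := sInf_lt_iff.mp hlt
      obtain ⟨b, ⟨hb, hB⟩, rfl⟩ := hc
      have hba : b ≤ a :=
        le_of_lt ((ENNReal.ofReal_lt_ofReal_iff_of_nonneg hb.le).mp hclt)
      refine le_trans (mul_le_mul_right (measure_mono fun x hx => ?_) _) (hB t ht)
      exact lt_of_le_of_lt (mul_le_mul_of_nonneg_right hba ht.le) hx
    -- hence a is admissible for h
    have hadm_h : ∀ t : ℝ, 0 < t →
        ENNReal.ofReal (θ t) * volume {x | a * t < |h x|} ≤ 1 := by
      intro t ht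
      have hsub : volume {x | a * t < |h x|}
          ≤ volume (⋃ k, {x | a * t < |hseq k x|}) := by
        apply measure_mono_ae
        filter_upwards [hconv] with x hx hxE
        have hxE' : a * t < |h x| := hxE
        have hgt : a * t < h x := by rwa [abs_of_nonneg (hnn x)] at hxE'
        obtain ⟨k, hk⟩ := (hx.eventually (eventually_gt_nhds hgt)).exists
        refine Set.mem_iUnion.2 ⟨k, ?_⟩
        show a * t < |hseq k x|
        rw [abs_of_nonneg (hnonneg k x)]; exact hk
      have hU : volume (⋃ k, {x | a * t < |hseq k x|})
          = ⨆ k, volume {x | a * t < |hseq k x|} := by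
        apply Directed.measure_iUnion
        apply Monotone.directed_le
        intro i j hij x hx
        simp only [Set.mem_setOf_eq] at hx ⊢
        rw [abs_of_nonneg (hnonneg i x)] at hx
        rw [abs_of_nonneg (hnonneg j x)]
        exact lt_of_lt_of_le hx (hmono x hij)
      calc ENNReal.ofReal (θ t) * volume {x | a * t < |h x|}
          ≤ ENNReal.ofReal (θ t) * ⨆ k, volume {x | a * t < |hseq k x|} := by
            rw [← hU]; exact mul_le_mul_right hsub _
        _ = ⨆ k, ENNReal.ofReal (θ t) * volume {x | a * t < |hseq k x|} := by
            rw [ENNReal.mul_iSup]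
        _ ≤ 1 := iSup_le fun k => hadm k t ht
    have : wNorm n θ h ≤ ENNReal.ofReal a :=
      sInf_le ⟨a, ⟨hapos, hadm_h⟩, rfl⟩
    rwa [haL] at this
  have hEq : L = wNorm n θ h := le_antisymm hLle key
  rw [← hEq]
  exact tendsto_atTop_iSup hNmono
end
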